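/- arXiv:1312.1844 — 4 statements merged into one kernel-verified Lean document; each statement's English description precedes it below -/
import Mathlib

section
/- Let n ≥ 2 be an even integer and a ∈ ℚ. Let L_n(a) be the n×n matrix over ℚ with (L_n(a))_{i,i} = i·a for 1 ≤ i ≤ n, (L_n(a))_{i,i−1} = i−1 for 2 ≤ i ≤ n, (L_n(a))_{i,i+1} = n−i for 1 ≤ i ≤ n−1, and all other entries 0. Then the characteristic polynomial of L_n(a) equals ∏_{i=1}^{n/2} ((X − i·a)·(X − (n+1−i)·a) − (n+1−2i)²) in ℚ[X]. -/
open Polynomial Matrix Finset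

lemma derivPow16 (γ : ℝ) (p : ℕ) :
    (X - C γ) * derivative ((X - C γ) ^ p) = C (p : ℝ) * (X - C γ) ^ p := by
  rcases p with _ | p
  · simp
  · rw [derivative_pow]
    push_cast
    simp only [derivative_sub, derivative_X, derivative_C, sub_zero, mul_one,
      Nat.add_sub_cancel]
    ring

lemma derivId16 (α β : ℝ) (p q : ℕ) :
    (X - C α) * (X - C β) * derivative ((X - C α) ^ p * (X - C β) ^ q)
      = (C (p : ℝ) * (X - C β) + C (q : ℝ) * (X - C α)) *
          ((X - C α) ^ p * (X - C β) ^ q) := by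
  rw [derivative_mul]
  linear_combination ((X - C β) * (X - C β) ^ q) * derivPow16 α p
    + ((X - C α) * (X - C α) ^ p) * derivPow16 β q

lemma coeffRel16 (a e : ℝ) (N : ℕ) (f : ℝ[X])
    (hid : ((X : ℝ[X]) ^ 2 - C a * X - 1) * derivative f = (C (N : ℝ) * X - C e) * f) :
    f.coeff 1 = e * f.coeff 0 ∧
      ∀ k : ℕ, ((k : ℝ) + 2) * f.coeff (k + 2) + a * ((k : ℝ) + 1) * f.coeff (k + 1)
          + ((N : ℝ) - (k : ℝ)) * f.coeff k = e * f.coeff (k + 1) := by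
  have e1 : X * X * derivative f - C a * (X * derivative f) - derivative f
      = C (N : ℝ) * (X * f) - C e * f := by linear_combination hid
  have key : ∀ j : ℕ, (X * X * derivative f).coeff j - a * (X * derivative f).coeff j
      - (derivative f).coeff j = (N : ℝ) * (X * f).coeff j - e * f.coeff j := by
    intro j
    have := congrArg (fun P : ℝ[X] => P.coeff j) e1
    simpa [coeff_sub, coeff_C_mul] using this
  constructor
  · have h0 := key 0
    simp only [mul_assoc, mul_coeff_zero, coeff_X_zero, zero_mul, mul_zero,
      coeff_derivative, Nat.cast_zero, zero_add, mul_one, zero_sub, sub_zero] at h0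
    linarith
  · intro k
    rcases k with _ | k
    · have h1 := key 1
      rw [mul_assoc] at h1
      rw [coeff_X_mul, coeff_X_mul, coeff_X_mul] at h1
      simp only [mul_coeff_zero, coeff_X_zero, zero_mul, coeff_derivative] at h1
      push_cast at h1 ⊢
      linarith
    · have h2 := key (k + 2)
      rw [mul_assoc] at h2
      rw [coeff_X_mul, coeff_X_mul, coeff_X_mul, coeff_X_mul] at h2
      simp only [coeff_derivative] at h2
      push_cast at h2 ⊢
      linarith

noncomputable def Lr16 (n : ℕ) (a : ℝ) : Matrix (Fin n) (Fin n) ℝ :=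
  Matrix.of fun i j =>
    if i = j then ((i.val : ℝ) + 1) * a
    else if j.val + 1 = i.val then (i.val : ℝ)
    else if i.val + 1 = j.val then (n : ℝ) - ((i.val : ℝ) + 1)
    else 0

lemma columnSum16 (n : ℕ) (a e : ℝ) (c : ℕ → ℝ)
    (hc0 : c 1 = e * c 0)
    (hcS : ∀ k : ℕ, ((k : ℝ) + 2) * c (k + 2) + a * ((k : ℝ) + 1) * c (k + 1)
          + (((n : ℝ) - 1) - (k : ℝ)) * c k = e * c (k + 1))
    (hctop : ∀ m : ℕ, n ≤ m → c m = 0)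
    (j : Fin n) :
    ∑ i : Fin n, c i.val * Lr16 n a i j = (a + e) * c j.val := by
  obtain ⟨jv, hjv⟩ := j
  simp only [Fin.val_mk]
  have hsum : ∑ i : Fin n, c i.val * Lr16 n a i ⟨jv, hjv⟩ =
      ∑ i ∈ range n, ((if i = jv then c jv * (((jv : ℝ) + 1) * a) else 0)
        + (if i = jv + 1 then c (jv + 1) * ((jv : ℝ) + 1) else 0)
        + (if i + 1 = jv then c i * ((n : ℝ) - ((i : ℝ) + 1)) else 0)) := by
    rw [← Fin.sum_univ_eq_sum_range]
    refine Finset.sum_congr rfl fun i _ => ?_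
    obtain ⟨iv, hiv⟩ := i
    simp only [Lr16, Matrix.of_apply, Fin.ext_iff, Fin.val_mk]
    split_ifs <;> first
      | (exfalso; omega)
      | (subst_vars; push_cast; ring)
      | (push_cast; ring)
  rw [hsum, Finset.sum_add_distrib, Finset.sum_add_distrib,
    Finset.sum_ite_eq' (range n) jv, Finset.sum_ite_eq' (range n) (jv + 1),
    if_pos (Finset.mem_range.mpr hjv)]
  have h2 : (if jv + 1 ∈ range n then c (jv + 1) * ((jv : ℝ) + 1) else 0)
      = c (jv + 1) * ((jv : ℝ) + 1) := by
    by_cases h : jv + 1 ∈ range n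
    · rw [if_pos h]
    · rw [if_neg h, hctop (jv + 1) (by simpa using h), zero_mul]
  rw [h2]
  rcases jv with _ | k
  · have h3 : ∑ i ∈ range n, (if i + 1 = 0 then c i * ((n : ℝ) - ((i : ℝ) + 1)) else 0) = 0 :=
      Finset.sum_eq_zero fun i _ => by simp
    rw [h3]
    simp only [Nat.cast_zero, zero_add]
    linarith [hc0]
  · have h3 : ∑ i ∈ range n, (if i + 1 = k + 1 then c i * ((n : ℝ) - ((i : ℝ) + 1)) else 0)
        = c k * ((n : ℝ) - ((k : ℝ) + 1)) := by
      simp only [add_left_inj]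
      rw [Finset.sum_ite_eq' (range n) k, if_pos (Finset.mem_range.mpr (by omega))]
    rw [h3]
    push_cast
    linarith [hcS k]

noncomputable def sq16 (a : ℝ) : ℝ := Real.sqrt (a ^ 2 + 4)
noncomputable def alp16 (a : ℝ) : ℝ := (a + sq16 a) / 2
noncomputable def bet16 (a : ℝ) : ℝ := (a - sq16 a) / 2
noncomputable def lam16 (n : ℕ) (a : ℝ) (p : ℕ) : ℝ :=
  a + (p : ℝ) * bet16 a + (((n : ℝ) - 1) - (p : ℝ)) * alp16 a

lemma sq16_pos (a : ℝ) : 0 < sq16 a :=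
  Real.sqrt_pos.mpr (by positivity)

lemma alp_add_bet (a : ℝ) : alp16 a + bet16 a = a := by
  unfold alp16 bet16; ring

lemma alp_mul_bet (a : ℝ) : alp16 a * bet16 a = -1 := by
  unfold alp16 bet16
  have h : sq16 a ^ 2 = a ^ 2 + 4 := Real.sq_sqrt (by positivity)
  nlinarith [h]

lemma evalCharpoly16 {m : ℕ} (M : Matrix (Fin m) (Fin m) ℝ) (x : ℝ) :
    (M.charpoly).eval x = (x • (1 : Matrix (Fin m) (Fin m) ℝ) - M).det := by
  rw [Matrix.charpoly, ← Polynomial.coe_evalRingHom, RingHom.map_det]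
  congr 1
  ext i j
  by_cases h : i = j <;>
    simp [Matrix.charmatrix_apply, Matrix.diagonal_apply, Matrix.sub_apply,
      Matrix.smul_apply, Matrix.one_apply, h]

lemma root16 (n : ℕ) (a : ℝ) (p : ℕ) (hp : p < n) :
    ((Lr16 n a).charpoly).eval (lam16 n a p) = 0 := by
  set α := alp16 a with hα
  set β := bet16 a with hβ
  have hs : α + β = a := alp_add_bet a
  have hm : α * β = -1 := alp_mul_bet a
  set q : ℕ := n - 1 - p with hq
  have hpq : p + q = n - 1 := by omega
  set f : ℝ[X] := (X - C α) ^ p * (X - C β) ^ q with hf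
  have hmono : f.Monic := ((monic_X_sub_C α).pow p).mul ((monic_X_sub_C β).pow q)
  have hdeg : f.natDegree = n - 1 := by
    rw [hf, ((monic_X_sub_C α).pow p).natDegree_mul ((monic_X_sub_C β).pow q)]
    simp [natDegree_pow, natDegree_X_sub_C, hpq]
  set e : ℝ := (p : ℝ) * β + (q : ℝ) * α with he
  have hid : ((X : ℝ[X]) ^ 2 - C a * X - 1) * derivative f
      = (C ((n - 1 : ℕ) : ℝ) * X - C e) * f := by
    have hXX : (X - C α) * (X - C β) = (X : ℝ[X]) ^ 2 - C a * X - 1 := by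
      have h1 : C a = C α + C β := by rw [← hs, C_add]
      have h2 : (C α : ℝ[X]) * C β = -1 := by
        rw [← C_mul, hm, map_neg, C_1]
      rw [h1]
      linear_combination h2
    have hC : C ((p : ℝ)) * (X - C β) + C ((q : ℝ)) * (X - C α)
        = C ((n - 1 : ℕ) : ℝ) * X - C e := by
      have h3 : ((n - 1 : ℕ) : ℝ) = (p : ℝ) + (q : ℝ) := by
        rw [← hpq]; push_cast; ring
      rw [h3, he]
      simp only [C_add, C_mul]
      ring
    rw [← hXX, derivId16 α β p q, hC]
  obtain ⟨hc0, hcS⟩ := coeffRel16 a e (n - 1) f hid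
  have hcS' : ∀ k : ℕ, ((k : ℝ) + 2) * f.coeff (k + 2) + a * ((k : ℝ) + 1) * f.coeff (k + 1)
      + (((n : ℝ) - 1) - (k : ℝ)) * f.coeff k = e * f.coeff (k + 1) := by
    intro k
    have h3 : ((n - 1 : ℕ) : ℝ) = (n : ℝ) - 1 := by
      have : 1 ≤ n := by omega
      push_cast [this]; ring
    rw [← h3]; exact hcS k
  have hctop : ∀ m : ℕ, n ≤ m → f.coeff m = 0 := fun m hm' =>
    coeff_eq_zero_of_natDegree_lt (by omega)
  have hcol := columnSum16 n a e f.coeff hc0 hcS' hctop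
  have hlam : lam16 n a p = a + e := by
    unfold lam16
    have h4 : ((q : ℕ) : ℝ) = ((n : ℝ) - 1) - (p : ℝ) := by
      rw [hq]; push_cast [show p ≤ n - 1 by omega, show 1 ≤ n by omega]; ring
    rw [he, ← hα, ← hβ, h4]; ring
  set w : Fin n → ℝ := fun i => f.coeff i.val with hw
  have hwne : w ≠ 0 := by
    intro h
    have h5 : w ⟨n - 1, by omega⟩ = 1 := by
      rw [hw]; simpa [← hdeg] using hmono.coeff_natDegree
    rw [h] at h5
    simp at h5
  have hvm : w ᵥ* (lam16 n a p • (1 : Matrix (Fin n) (Fin n) ℝ) - Lr16 n a) = 0 := by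
    funext j
    have h6 : (w ᵥ* (lam16 n a p • (1 : Matrix (Fin n) (Fin n) ℝ) - Lr16 n a)) j
        = ∑ i : Fin n, w i * ((lam16 n a p • (1 : Matrix (Fin n) (Fin n) ℝ) - Lr16 n a) i j) := by
      simp [Matrix.vecMul, dotProduct]
    rw [h6]
    simp only [Matrix.sub_apply, Matrix.smul_apply, Matrix.one_apply, smul_eq_mul,
      mul_sub, mul_ite, mul_one, mul_zero]
    rw [Finset.sum_sub_distrib]
    rw [Finset.sum_ite_eq' Finset.univ j (fun i => w i * lam16 n a p)]
    simp only [Finset.mem_univ, if_true]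
    rw [hcol j, hlam]
    simp [hw]
    ring
  have hdet : (lam16 n a p • (1 : Matrix (Fin n) (Fin n) ℝ) - Lr16 n a).det = 0 :=
    Matrix.exists_vecMul_eq_zero_iff.mp ⟨w, hwne, hvm⟩
  rw [evalCharpoly16, hdet]

lemma lamInj16 (n : ℕ) (a : ℝ) {p1 p2 : ℕ} (h : lam16 n a p1 = lam16 n a p2) : p1 = p2 := by
  unfold lam16 at h
  have hs := sq16_pos a
  have h2 : (p1 : ℝ) * (bet16 a - alp16 a) = (p2 : ℝ) * (bet16 a - alp16 a) := by ring_nf; ring_nf at h; linarith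
  have h3 : bet16 a - alp16 a = -(sq16 a) := by unfold alp16 bet16; ring
  rw [h3] at h2
  have h4 : (p1 : ℝ) = (p2 : ℝ) := by
    have := mul_right_cancel₀ (by linarith : -(sq16 a) ≠ 0) h2
    exact this
  exact_mod_cast h4

lemma cpProd16 (n : ℕ) (a : ℝ) :
    (Lr16 n a).charpoly = ∏ p ∈ range n, (X - C (lam16 n a p)) := by
  set P := (Lr16 n a).charpoly with hP
  set Q := ∏ p ∈ range n, (X - C (lam16 n a p)) with hQ
  have hPm : P.Monic := Matrix.charpoly_monic _
  have hQm : Q.Monic := monic_prod_of_monic _ _ fun _ _ => monic_X_sub_C _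
  have hPd : P.natDegree = n := by
    rw [hP, Matrix.charpoly_natDegree_eq_dim]
    simp
  have hQd : Q.natDegree = n := by
    rw [hQ, natDegree_prod_of_monic _ _ fun _ _ => monic_X_sub_C _]
    simp [natDegree_X_sub_C]
  have heval : ∀ i : Fin n, (P - Q).eval (lam16 n a i.val) = 0 := by
    intro i
    rw [eval_sub, root16 n a i.val i.isLt, hQ, eval_prod]
    rw [Finset.prod_eq_zero (Finset.mem_range.mpr i.isLt) (by simp)]
    ring
  have hz : P - Q = 0 := by
    by_cases hPQ : P - Q = 0
    · exact hPQ
    · have h1 : P.degree = Q.degree := by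
        rw [Polynomial.degree_eq_natDegree hPm.ne_zero, Polynomial.degree_eq_natDegree hQm.ne_zero,
          hPd, hQd]
      have hdd : (P - Q).degree < (n : WithBot ℕ) := by
        calc (P - Q).degree < P.degree :=
              Polynomial.degree_sub_lt h1 hPm.ne_zero (by rw [hPm.leadingCoeff, hQm.leadingCoeff])
          _ = (n : WithBot ℕ) := by rw [Polynomial.degree_eq_natDegree hPm.ne_zero, hPd]
      have hnd : (P - Q).natDegree < n := by
        rwa [Polynomial.natDegree_lt_iff_degree_lt hPQ]
      exact Polynomial.eq_zero_of_natDegree_lt_card_of_eval_eq_zero _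
        (f := fun i : Fin n => lam16 n a i.val)
        (fun i1 i2 h => Fin.ext (lamInj16 n a h)) heval (by simpa using hnd)
  exact sub_eq_zero.mp hz

lemma pair16 (n : ℕ) (a : ℝ) (i m : ℕ) (hn : n = m + m) (hi : i < m) :
    (X - C (lam16 n a i)) * (X - C (lam16 n a (m + (m - 1 - i))))
      = (X - C (((i : ℝ) + 1) * a)) * (X - C (((n : ℝ) - (i : ℝ)) * a))
        - C (((n : ℝ) - 1 - 2 * (i : ℝ)) ^ 2) := by
  set α := alp16 a with hα
  set β := bet16 a with hβ
  have hs : α + β = a := alp_add_bet a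
  have hmm : α * β = -1 := alp_mul_bet a
  set u : ℝ := (i : ℝ) with hu
  set v : ℝ := (n : ℝ) - 1 - u with hv
  have hL1 : lam16 n a i = a + u * β + v * α := by unfold lam16; rw [← hα, ← hβ]
  have hL2 : lam16 n a (m + (m - 1 - i)) = a + v * β + u * α := by
    unfold lam16
    rw [← hα, ← hβ]
    have hcast : ((m + (m - 1 - i) : ℕ) : ℝ) = v := by
      rw [hv, hu, hn]; push_cast [show i ≤ m - 1 by omega, show 1 ≤ m by omega]; ring
    rw [hcast, hv]
    ring
  rw [hL1, hL2]
  set L1 : ℝ := a + u * β + v * α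
  set L2 : ℝ := a + v * β + u * α
  have E1 : L1 + L2 = ((u + 1) * a) + (((n : ℝ) - u) * a) := by
    have hnv : (n : ℝ) = u + v + 1 := by rw [hv]; ring
    rw [hnv]
    linear_combination (u + v) * hs
  have E2 : L1 * L2 = ((u + 1) * a) * (((n : ℝ) - u) * a) - ((n : ℝ) - 1 - 2 * u) ^ 2 := by
    have hnv : (n : ℝ) = u + v + 1 := by rw [hv]; ring
    rw [hnv]
    linear_combination (a * (u + v) + 2 * u * v * a + u * v * (α + β - a)) * hs
      + (u - v) ^ 2 * hmm
  have hC1 : (C L1 : ℝ[X]) + C L2 = C ((u + 1) * a) + C (((n : ℝ) - u) * a) := by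
    rw [← C_add, ← C_add, E1]
  have hC2 : (C L1 : ℝ[X]) * C L2
      = C ((u + 1) * a) * C (((n : ℝ) - u) * a) - C (((n : ℝ) - 1 - 2 * u) ^ 2) := by
    rw [← C_mul, ← C_mul, ← C_sub, E2]
  linear_combination (-(X : ℝ[X])) * hC1 + hC2

lemma realMain16 (n : ℕ) (hn : 2 ≤ n) (heven : Even n) (a : ℝ) :
    (Lr16 n a).charpoly = ∏ i ∈ range (n / 2),
      ((X - C (((i : ℝ) + 1) * a)) * (X - C (((n : ℝ) - (i : ℝ)) * a))
        - C (((n : ℝ) - 1 - 2 * (i : ℝ)) ^ 2)) := by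
  obtain ⟨m, hm⟩ := heven
  have hm2 : n / 2 = m := by omega
  rw [cpProd16, hm2]
  have hsplit : ∏ p ∈ range n, (X - C (lam16 n a p))
      = (∏ p ∈ range m, (X - C (lam16 n a p)))
        * ∏ p ∈ range m, (X - C (lam16 n a (m + p))) := by
    rw [← Finset.prod_range_add]
    congr 1
    rw [hm]
  rw [hsplit]
  have hrefl : ∏ p ∈ range m, (X - C (lam16 n a (m + p)))
      = ∏ p ∈ range m, (X - C (lam16 n a (m + (m - 1 - p)))) :=
    (Finset.prod_range_reflect (fun p => (X - C (lam16 n a (m + p)))) m).symm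
  rw [hrefl, ← Finset.prod_mul_distrib]
  exact Finset.prod_congr rfl fun i hi =>
    pair16 n a i m hm (Finset.mem_range.mp hi)

/-- The `n×n` matrix `L_n(a)` over `ℚ` with (1-based) diagonal entries `i·a`,
subdiagonal entries `i−1` and superdiagonal entries `n−i`. -/
def Ln (n : ℕ) (a : ℚ) : Matrix (Fin n) (Fin n) ℚ :=
  Matrix.of fun i j =>
    if i = j then ((i.val : ℚ) + 1) * a
    else if j.val + 1 = i.val then (i.val : ℚ)
    else if i.val + 1 = j.val then (n : ℚ) - ((i.val : ℚ) + 1)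
    else 0

/-- Let `n ≥ 2` be even and `a ∈ ℚ`. The characteristic polynomial of `L_n(a)` is
`∏_{i=1}^{n/2} ((X − i·a)·(X − (n+1−i)·a) − (n+1−2i)²)`. -/
theorem stmt_16 (n : ℕ) (hn : 2 ≤ n) (heven : Even n) (a : ℚ) :
    Matrix.charpoly (Ln n a) =
      ∏ i ∈ Finset.range (n / 2),
        ((Polynomial.X - Polynomial.C (((i : ℚ) + 1) * a)) *
            (Polynomial.X - Polynomial.C (((n : ℚ) - i) * a))
          - Polynomial.C (((n : ℚ) - 1 - 2 * i) ^ 2)) := by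
  apply Polynomial.map_injective (algebraMap ℚ ℝ) (algebraMap ℚ ℝ).injective
  have hmap : (Ln n a).map (algebraMap ℚ ℝ) = Lr16 n ((a : ℝ)) := by
    ext i j
    simp only [Ln, Lr16, Matrix.map_apply, Matrix.of_apply, apply_ite (algebraMap ℚ ℝ),
      eq_ratCast]
    split_ifs <;> push_cast <;> ring
  rw [← Matrix.charpoly_map, hmap, realMain16 n hn heven]
  rw [Polynomial.map_prod]
  refine Finset.prod_congr rfl fun i _ => ?_
  simp only [Polynomial.map_sub, Polynomial.map_mul, Polynomial.map_X, Polynomial.map_C,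
    eq_ratCast]
  push_cast
  ring
end

section
/- Let n ≥ 1 be an integer. For 1 ≤ k ≤ n let α_k ∈ ℚ^n be the row vector whose j-th coordinate, for 1 ≤ j ≤ n, is the binomial coefficient binomial(k−1, j−1). Then for every k with 1 ≤ k ≤ n, the row-vector–matrix product satisfies α_k · A_n = k · α_k; that is, α_k is a left eigenvector of A_n with eigenvalue k. -/
/-- The `n×n` matrix `A_n` over `ℚ` with (1-based) diagonal entries `(A_n)_{i,i} = i`
and subdiagonal entries `(A_n)_{i,i−1} = i−1`. -/
def An (n : ℕ) : Matrix (Fin n) (Fin n) ℚ :=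
  Matrix.of fun i j =>
    if i = j then (i.val : ℚ) + 1
    else if j.val + 1 = i.val then (i.val : ℚ)
    else 0

/-- Let `n ≥ 1`. For `1 ≤ k ≤ n`, the row vector `α_k` with `j`-th coordinate
(1-based) `C(k−1, j−1)` satisfies `α_k · A_n = k·α_k`, i.e. it is a left
eigenvector of `A_n` with eigenvalue `k`. -/
theorem stmt_17 (n : ℕ) (hn : 1 ≤ n) :
    ∀ k : ℕ, 1 ≤ k → k ≤ n →
      Matrix.vecMul (fun j : Fin n => (Nat.choose (k - 1) j.val : ℚ)) (An n) =
        fun j : Fin n => (k : ℚ) * (Nat.choose (k - 1) j.val : ℚ) := by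
  intro k hk1 hkn
  funext j
  have key : ∀ i : Fin n,
      (Nat.choose (k - 1) i.val : ℚ) *
        (if i = j then (i.val : ℚ) + 1
          else if j.val + 1 = i.val then (i.val : ℚ) else 0) =
      (if i = j then (Nat.choose (k - 1) j.val : ℚ) * ((j.val : ℚ) + 1) else 0) +
      (if j.val + 1 = i.val then (Nat.choose (k - 1) i.val : ℚ) * (i.val : ℚ) else 0) := by
    intro i
    by_cases h : i = j
    · subst h
      simp
    · by_cases h2 : j.val + 1 = i.val
      · simp [h, h2]
      · simp [h, h2]
  simp only [Matrix.vecMul, dotProduct, An, Matrix.of_apply]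
  rw [Finset.sum_congr rfl (fun i _ => key i), Finset.sum_add_distrib]
  rw [Finset.sum_ite_eq' Finset.univ j (fun _ => (Nat.choose (k - 1) j.val : ℚ) * ((j.val : ℚ) + 1))]
  simp only [Finset.mem_univ, if_true]
  by_cases hj : j.val + 1 < n
  · have hrewrite : ∀ i : Fin n, (j.val + 1 = i.val) ↔ (i = (⟨j.val + 1, hj⟩ : Fin n)) := by
      intro i
      constructor
      · intro h; exact Fin.ext h.symm
      · intro h; subst h; rfl
    rw [Finset.sum_congr rfl (fun i _ => by rw [if_congr (hrewrite i) rfl rfl])]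
    rw [Finset.sum_ite_eq' Finset.univ (⟨j.val + 1, hj⟩ : Fin n)
      (fun i => (Nat.choose (k - 1) i.val : ℚ) * (i.val : ℚ))]
    simp only [Finset.mem_univ, if_true]
    -- arithmetic identity
    have hnat : k * Nat.choose (k - 1) j.val =
        Nat.choose (k - 1) j.val * (j.val + 1) + Nat.choose (k - 1) (j.val + 1) * (j.val + 1) := by
      have h1 : Nat.succ (k - 1) * Nat.choose (k - 1) j.val =
          Nat.choose (k - 1 + 1) (j.val + 1) * (j.val + 1) := Nat.add_one_mul_choose_eq (k - 1) j.val
      have hk : k - 1 + 1 = k := Nat.succ_pred_eq_of_pos hk1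
      rw [Nat.choose_succ_succ, Nat.add_mul] at h1
      rw [← h1]
      simp [Nat.succ_eq_add_one, hk]
    have := congrArg (fun m : ℕ => (m : ℚ)) hnat
    push_cast at this ⊢
    linarith [this]
  · have hall : ∀ i : Fin n, ¬ (j.val + 1 = i.val) := by
      intro i h
      exact hj (h ▸ i.isLt)
    rw [Finset.sum_congr rfl (fun i _ => if_neg (hall i))]
    simp only [Finset.sum_const_zero, add_zero]
    -- here j.val + 1 = n (since j.val < n)
    have hjn : j.val + 1 = n := Nat.le_antisymm j.isLt (Nat.not_lt.mp hj)
    rcases Nat.lt_or_ge (k - 1) j.val with hlt | hge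
    · rw [Nat.choose_eq_zero_of_lt hlt]
      simp
    · have : k - 1 = j.val := by omega
      have hk : k = j.val + 1 := by omega
      rw [hk]
      push_cast
      ring
end

section
/- Let n ≥ 1 be an integer. Then the characteristic polynomial of B_n equals (X − (n+1))^n in ℚ[X], and every row vector v ∈ ℚ^n satisfying v · B_n = (n+1)·v is a scalar multiple of the row vector α_n whose j-th coordinate, for 1 ≤ j ≤ n, is binomial(n−1, j−1). -/
/-- The `n×n` matrix `B_n` over `ℚ` with (1-based) diagonal entries `2i`,
subdiagonal entries `i−1` and superdiagonal entries `−(n−i)`. -/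
def Bn (n : ℕ) : Matrix (Fin n) (Fin n) ℚ :=
  Matrix.of fun i j =>
    if i = j then 2 * ((i.val : ℚ) + 1)
    else if j.val + 1 = i.val then (i.val : ℚ)
    else if i.val + 1 = j.val then -((n : ℚ) - ((i.val : ℚ) + 1))
    else 0


open Finset Polynomial

def Pm (n : ℕ) : Matrix (Fin n) (Fin n) ℚ :=
  Matrix.of fun k j => (Nat.choose k.val j.val : ℚ)

def Tm (n : ℕ) : Matrix (Fin n) (Fin n) ℚ :=
  Matrix.of fun k j =>
    if k = j then (n : ℚ) + 1
    else if k.val + 1 = j.val then (k.val : ℚ) + 1 - n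
    else 0

lemma choose_succ_q (k j : ℕ) :
    ((Nat.choose k (j+1) : ℚ)) * (j+1) = (Nat.choose k j : ℚ) * ((k : ℚ) - j) := by
  rcases le_or_gt j k with h | h
  · have h2 : ((Nat.choose k (j+1) * (j+1) : ℕ) : ℚ) = ((Nat.choose k j * (k - j) : ℕ) : ℚ) := by
      rw [Nat.choose_succ_right_eq]
    push_cast [Nat.cast_sub h] at h2
    linarith
  · rw [Nat.choose_eq_zero_of_lt h, Nat.choose_eq_zero_of_lt (by omega)]
    simp

lemma sum_fin_eq (n m : ℕ) (f : ℕ → ℚ) :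
    (∑ i : Fin n, if i.val = m then f i.val else 0) = if m < n then f m else 0 := by
  rw [Fin.sum_univ_eq_sum_range (fun i => if i = m then f i else 0)]
  rw [Finset.sum_ite_eq' (Finset.range n) m f]
  simp

lemma hL (n : ℕ) (k j i : Fin n) : Pm n k i * Bn n i j =
      (if i.val = j.val then (Nat.choose k.val j.val : ℚ) * (2 * ((j.val : ℚ) + 1)) else 0)
    + (if i.val = j.val + 1 then (Nat.choose k.val (j.val+1) : ℚ) * ((j.val : ℚ) + 1) else 0)
    + (if i.val + 1 = j.val then (Nat.choose k.val i.val : ℚ) * ((j.val : ℚ) - n) else 0) := by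
  simp only [Pm, Bn, Matrix.of_apply, Fin.ext_iff]
  split_ifs <;> try omega
  all_goals first
    | (rename_i h _; have hc : ((j:ℕ):ℚ) = (i:ℕ) + 1 := by exact_mod_cast h.symm
       rw [hc]; push_cast; ring)
    | (rename_i h _ _ _; simp [h]; done)
    | (rename_i h _ _; rw [← h]; push_cast; ring)
    | (rename_i h _ _ _; rw [← h]; push_cast; ring)
    | (push_cast; ring)
    | simp

lemma hR (n : ℕ) (k j i : Fin n) : Tm n k i * Pm n i j =
      (if i.val = k.val then ((n : ℚ) + 1) * (Nat.choose k.val j.val : ℚ) else 0)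
    + (if i.val = k.val + 1 then ((k.val : ℚ) + 1 - n) * (Nat.choose (k.val+1) j.val : ℚ) else 0) := by
  simp only [Tm, Pm, Matrix.of_apply, Fin.ext_iff]
  split_ifs <;> try omega
  all_goals first
    | (rename_i h _; rw [show (i:ℕ) = (k:ℕ) from by omega]; push_cast; ring)
    | (rename_i h _ _; rw [show (i:ℕ) = (k:ℕ)+1 from by omega]; push_cast; ring)
    | simp_all
    | (push_cast; ring)
    | simp

lemma key (n : ℕ) : Pm n * Bn n = Tm n * Pm n := by
  ext k j
  rw [Matrix.mul_apply, Matrix.mul_apply]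
  calc (∑ i : Fin n, Pm n k i * Bn n i j)
      = (∑ i : Fin n, ((if i.val = j.val then (Nat.choose k.val j.val : ℚ) * (2 * ((j.val : ℚ) + 1)) else 0)
        + (if i.val = j.val + 1 then (Nat.choose k.val (j.val+1) : ℚ) * ((j.val : ℚ) + 1) else 0)
        + (if i.val + 1 = j.val then (Nat.choose k.val i.val : ℚ) * ((j.val : ℚ) - n) else 0))) :=
        Finset.sum_congr rfl (fun i _ => hL n k j i)
    _ = (Nat.choose k.val j.val : ℚ) * (2 * ((j.val : ℚ) + 1))
        + (Nat.choose k.val (j.val+1) : ℚ) * ((j.val : ℚ) + 1)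
        + (if 1 ≤ j.val then (Nat.choose k.val (j.val - 1) : ℚ) * ((j.val : ℚ) - n) else 0) := by
        rw [Finset.sum_add_distrib, Finset.sum_add_distrib]
        congr 1
        · congr 1
          · rw [sum_fin_eq n j.val (fun m => (Nat.choose k.val j.val : ℚ) * (2 * ((j.val : ℚ) + 1)))]
            simp [j.isLt]
          · rw [sum_fin_eq n (j.val+1) (fun m => (Nat.choose k.val (j.val+1) : ℚ) * ((j.val : ℚ) + 1))]
            split_ifs with h
            · rfl
            · rw [Nat.choose_eq_zero_of_lt (by omega : k.val < j.val + 1)]; simp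
        · rcases Nat.eq_zero_or_pos j.val with h0 | h1
          · simp [h0]
          · obtain ⟨m, hm⟩ : ∃ m, j.val = m + 1 := ⟨j.val - 1, by omega⟩
            have : ∀ i : Fin n, (if i.val + 1 = j.val then (Nat.choose k.val i.val : ℚ) * ((j.val : ℚ) - n) else 0)
                = (if i.val = m then (Nat.choose k.val i.val : ℚ) * ((j.val : ℚ) - n) else 0) := by
              intro i; simp only [hm]; split_ifs <;> first | rfl | omega
            rw [Finset.sum_congr rfl (fun i _ => this i)]
            rw [sum_fin_eq n m (fun i => (Nat.choose k.val i : ℚ) * ((j.val : ℚ) - n))]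
            have hmn : m < n := by have := j.isLt; omega
            rw [if_pos hmn, if_pos (show 1 ≤ j.val from h1), show j.val - 1 = m from by omega]
    _ = ((n : ℚ) + 1) * (Nat.choose k.val j.val : ℚ)
        + ((k.val : ℚ) + 1 - n) * (Nat.choose (k.val+1) j.val : ℚ) := by
        rcases Nat.eq_zero_or_pos j.val with h0 | h1
        · simp [h0, Nat.choose_one_right]; ring
        · obtain ⟨m, hm⟩ : ∃ m, j.val = m + 1 := ⟨j.val - 1, by omega⟩
          rw [hm]
          simp only [show 1 ≤ m + 1 from by omega, if_true, Nat.add_sub_cancel]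
          have e1 := choose_succ_q k.val (m+1)
          have e2 := choose_succ_q k.val m
          have e3 : (Nat.choose (k.val+1) (m+1) : ℚ) = Nat.choose k.val m + Nat.choose k.val (m+1) := by
            rw [Nat.choose_succ_succ]; push_cast; ring
          rw [e3]
          push_cast at e1 e2 ⊢
          linear_combination e1 + e2
    _ = ∑ i : Fin n, Tm n k i * Pm n i j := by
        rw [Finset.sum_congr rfl (fun i _ => hR n k j i), Finset.sum_add_distrib]
        rw [sum_fin_eq n k.val (fun m => ((n : ℚ) + 1) * (Nat.choose k.val j.val : ℚ))]
        rw [sum_fin_eq n (k.val+1) (fun m => ((k.val : ℚ) + 1 - n) * (Nat.choose (k.val+1) j.val : ℚ))]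
        simp only [k.isLt, if_true]
        split_ifs with h
        · rfl
        · have h2 : k.val + 1 = n := by have := k.isLt; omega
          have h3 : ((k.val:ℚ) + 1) = n := by exact_mod_cast congrArg (Nat.cast (R := ℚ)) h2
          rw [show ((k.val:ℚ) + 1 - n) = 0 from by linarith]
          simp

lemma Pm_blockTriangular (n : ℕ) : (Pm n).BlockTriangular OrderDual.toDual := by
  intro i j h
  have : i.val < j.val := h
  simp [Pm, Nat.choose_eq_zero_of_lt this]

lemma Pm_det (n : ℕ) : (Pm n).det = 1 := by
  rw [Matrix.det_of_lowerTriangular (Pm n) (Pm_blockTriangular n)]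
  simp [Pm]

noncomputable instance (n : ℕ) : Invertible (Pm n) :=
  Matrix.invertibleOfIsUnitDet _ (by rw [Pm_det]; exact isUnit_one)

lemma charpoly_conj {n : ℕ} (P A : Matrix (Fin n) (Fin n) ℚ) [Invertible P] :
    (⅟P * A * P).charpoly = A.charpoly := by
  unfold Matrix.charpoly
  have hmap : (Polynomial.C : ℚ →+* ℚ[X]).mapMatrix (⅟P * A * P)
      = (Polynomial.C : ℚ →+* ℚ[X]).mapMatrix ⅟P * (Polynomial.C : ℚ →+* ℚ[X]).mapMatrix A
        * (Polynomial.C : ℚ →+* ℚ[X]).mapMatrix P := by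
    simp [map_mul]
  have hcomm : ∀ M : Matrix (Fin n) (Fin n) ℚ[X],
      Matrix.scalar (Fin n) (X : ℚ[X]) * M = M * Matrix.scalar (Fin n) (X : ℚ[X]) :=
    fun M => (Matrix.scalar_commute (X : ℚ[X]) (fun r => (Polynomial.commute_X r)) M).eq
  have hscal : Matrix.scalar (Fin n) (X : ℚ[X])
      = (Polynomial.C : ℚ →+* ℚ[X]).mapMatrix ⅟P * Matrix.scalar (Fin n) (X : ℚ[X])
        * (Polynomial.C : ℚ →+* ℚ[X]).mapMatrix P := by
    rw [mul_assoc, hcomm, ← mul_assoc, ← map_mul, invOf_mul_self, map_one, one_mul]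
  have : Matrix.charmatrix (⅟P * A * P)
      = (Polynomial.C : ℚ →+* ℚ[X]).mapMatrix ⅟P * Matrix.charmatrix A
        * (Polynomial.C : ℚ →+* ℚ[X]).mapMatrix P := by
    unfold Matrix.charmatrix
    rw [hmap]
    rw [mul_sub, sub_mul, ← hscal]
  rw [this, Matrix.det_mul, Matrix.det_mul]
  have hd : ((Polynomial.C : ℚ →+* ℚ[X]).mapMatrix ⅟P).det * ((Polynomial.C : ℚ →+* ℚ[X]).mapMatrix P).det = 1 := by
    rw [mul_comm, ← Matrix.det_mul, ← map_mul, mul_invOf_self, map_one, Matrix.det_one]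
  calc ((Polynomial.C : ℚ →+* ℚ[X]).mapMatrix ⅟P).det * (Matrix.charmatrix A).det
      * ((Polynomial.C : ℚ →+* ℚ[X]).mapMatrix P).det
      = (Matrix.charmatrix A).det * (((Polynomial.C : ℚ →+* ℚ[X]).mapMatrix ⅟P).det
        * ((Polynomial.C : ℚ →+* ℚ[X]).mapMatrix P).det) := by ring
    _ = (Matrix.charmatrix A).det := by rw [hd, mul_one]

lemma Bn_eq (n : ℕ) : Bn n = ⅟(Pm n) * Tm n * Pm n := by
  rw [mul_assoc, ← key n, ← mul_assoc, invOf_mul_self, one_mul]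

lemma Tm_blockTriangular (n : ℕ) : (Tm n).BlockTriangular id := by
  intro i j h
  have hij : j.val < i.val := h
  simp only [Tm, Matrix.of_apply]
  have hne : ¬ i = j := fun h' => by rw [h'] at hij; omega
  rw [if_neg hne, if_neg (by omega)]

lemma Tm_charpoly (n : ℕ) : (Tm n).charpoly = (X - Polynomial.C ((n : ℚ) + 1)) ^ n := by
  rw [Matrix.charpoly_of_upperTriangular (Tm n) (Tm_blockTriangular n)]
  have : ∀ i : Fin n, Tm n i i = (n : ℚ) + 1 := by intro i; simp [Tm]
  calc (∏ i : Fin n, (X - Polynomial.C (Tm n i i)))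
      = ∏ i : Fin n, (X - Polynomial.C ((n:ℚ)+1)) := by
        exact Finset.prod_congr rfl (fun i _ => by rw [this i])
    _ = (X - Polynomial.C ((n : ℚ) + 1)) ^ n := by
        rw [Finset.prod_const, Finset.card_univ, Fintype.card_fin]

lemma Bn_charpoly (n : ℕ) : (Bn n).charpoly = (X - Polynomial.C ((n : ℚ) + 1)) ^ n := by
  rw [Bn_eq n, charpoly_conj, Tm_charpoly]

lemma sum_fin_eq' {n : ℕ} (m : ℕ) (hm : m < n) (f : Fin n → ℚ) :
    (∑ i : Fin n, if i.val = m then f i else 0) = f ⟨m, hm⟩ := by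
  rw [Finset.sum_eq_single (⟨m, hm⟩ : Fin n)]
  · simp
  · intro b _ hb
    rw [if_neg (fun h => hb (Fin.ext h))]
  · intro h; exact absurd (Finset.mem_univ _) h

lemma eig (n : ℕ) (hn : 1 ≤ n) (v : Fin n → ℚ)
    (hv : Matrix.vecMul v (Bn n) = ((n : ℚ) + 1) • v) :
    ∃ t : ℚ, v = t • fun j : Fin n => (Nat.choose (n - 1) j.val : ℚ) := by
  set c := Matrix.vecMul v (⅟(Pm n)) with hc
  have hcP : Matrix.vecMul c (Pm n) = v := by
    rw [hc, Matrix.vecMul_vecMul, invOf_mul_self, Matrix.vecMul_one]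
  have h1 : Matrix.vecMul (Matrix.vecMul c (Tm n)) (Pm n)
      = Matrix.vecMul (((n : ℚ) + 1) • c) (Pm n) := by
    rw [Matrix.vecMul_vecMul, ← key n, ← Matrix.vecMul_vecMul, hcP, hv,
      Matrix.smul_vecMul, hcP]
  have h2 : Matrix.vecMul c (Tm n) = ((n : ℚ) + 1) • c := by
    have h3 := congrArg (fun w => Matrix.vecMul w (⅟(Pm n))) h1
    simpa only [Matrix.vecMul_vecMul, mul_assoc, mul_invOf_self, mul_one, Matrix.vecMul_one] using h3
  -- coordinates of c below n-1 vanish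
  have hzero : ∀ i : Fin n, i.val + 1 < n → c i = 0 := by
    intro i hi
    have hj : i.val + 1 < n := hi
    set j : Fin n := ⟨i.val + 1, hj⟩ with hjdef
    have h4 := congrFun h2 j
    have h5 : Matrix.vecMul c (Tm n) j
        = c j * ((n : ℚ) + 1) + c i * ((i.val : ℚ) + 1 - n) := by
      show (∑ l : Fin n, c l * Tm n l j) = _
      have hpt : ∀ l : Fin n, c l * Tm n l j
          = (if l.val = j.val then c l * ((n : ℚ) + 1) else 0)
          + (if l.val = i.val then c l * ((i.val : ℚ) + 1 - n) else 0) := by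
        intro l
        simp only [Tm, Matrix.of_apply, Fin.ext_iff, hjdef]
        split_ifs <;> first
          | omega
          | (rename_i hl _; rw [show (l:ℕ) = (i:ℕ) from by omega]; ring)
          | simp_all
          | ring
      rw [Finset.sum_congr rfl (fun l _ => hpt l), Finset.sum_add_distrib,
        sum_fin_eq' j.val j.isLt, sum_fin_eq' i.val i.isLt]
    have h6 : (((n : ℚ) + 1) • c) j = c j * ((n : ℚ) + 1) := by
      simp [mul_comm]
    rw [h5, h6] at h4
    have h7 : c i * ((i.val : ℚ) + 1 - n) = 0 := by linarith
    have h8 : ((i.val : ℚ) + 1 - n) ≠ 0 := by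
      have : ((i.val : ℚ) + 1) < n := by exact_mod_cast (by exact_mod_cast hi : ((i.val + 1 : ℕ) : ℚ) < (n : ℚ))
      linarith
    exact (mul_eq_zero.mp h7).resolve_right h8
  -- now v = c_{n-1} * binomial row
  have hn1 : n - 1 < n := by omega
  refine ⟨c ⟨n - 1, hn1⟩, ?_⟩
  funext j
  rw [← hcP]
  show (∑ l : Fin n, c l * Pm n l j) = _
  rw [Finset.sum_eq_single (⟨n - 1, hn1⟩ : Fin n)]
  · simp [Pm, mul_comm]
  · intro b _ hb
    have : b.val + 1 < n := by
      have := b.isLt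
      have : b.val ≠ n - 1 := fun h => hb (Fin.ext h)
      omega
    rw [hzero b this, zero_mul]
  · intro h; exact absurd (Finset.mem_univ _) h

/-- Let `n ≥ 1`. The characteristic polynomial of `B_n` is `(X − (n+1))^n`, and
every row vector `v` with `v·B_n = (n+1)·v` is a scalar multiple of the row
vector `α_n` with `j`-th coordinate (1-based) `C(n−1, j−1)`. -/
theorem stmt_18 (n : ℕ) (hn : 1 ≤ n) :
    Matrix.charpoly (Bn n) = (Polynomial.X - Polynomial.C ((n : ℚ) + 1)) ^ n ∧
    ∀ v : Fin n → ℚ, Matrix.vecMul v (Bn n) = ((n : ℚ) + 1) • v →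
      ∃ t : ℚ, v = t • fun j : Fin n => (Nat.choose (n - 1) j.val : ℚ) := by
  constructor
  · exact Bn_charpoly n
  · exact eig n hn
end

section
/- Let n ≥ 1 be an integer, and for 1 ≤ k ≤ n let α_k ∈ ℚ^n be the row vector whose j-th coordinate, for 1 ≤ j ≤ n, is binomial(k−1, j−1). Set B̃_n := (n+1)·I_n − B_n. Then for every k with 1 ≤ k ≤ n−1 one has α_k · B̃_n = (n−k)·α_{k+1}, and moreover α_n · B̃_n = 0. -/
lemma key_pt (n k' : ℕ) (j i : Fin n) :
    (Nat.choose k' i.val : ℚ) *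
        ((((n : ℚ) + 1) * (if i = j then 1 else 0)) - Bn n i j) =
      (if i.val + 1 = j.val then (Nat.choose k' (j.val - 1) : ℚ) * ((n : ℚ) - j.val) else 0)
      + (if i = j then (Nat.choose k' j.val : ℚ) * ((n : ℚ) - 2 * j.val - 1) else 0)
      + (if i.val = j.val + 1 then (Nat.choose k' (j.val + 1) : ℚ) * (-((j.val : ℚ) + 1)) else 0) := by
  simp only [Bn, Matrix.of_apply]
  by_cases h1 : i = j
  · subst h1
    rw [if_pos rfl, if_pos rfl, if_pos rfl, if_neg (by omega : ¬ i.val + 1 = i.val),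
      if_neg (by omega : ¬ i.val = i.val + 1)]
    ring
  · have h1' : i.val ≠ j.val := fun h => h1 (Fin.ext h)
    rw [if_neg h1, if_neg h1, if_neg h1, mul_zero, zero_sub]
    by_cases h2 : i.val + 1 = j.val
    · rw [if_neg (by omega : ¬ j.val + 1 = i.val), if_pos h2, if_pos h2,
        if_neg (by omega : ¬ i.val = j.val + 1)]
      have e1 : (j.val : ℚ) = (i.val : ℚ) + 1 := by exact_mod_cast h2.symm
      have e2 : j.val - 1 = i.val := by omega
      rw [e2, e1]
      ring
    · by_cases h3 : i.val = j.val + 1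
      · rw [if_pos (h3.symm), if_neg h2, if_pos h3]
        have e1 : (i.val : ℚ) = (j.val : ℚ) + 1 := by exact_mod_cast h3
        rw [← h3, e1]
        ring
      · rw [if_neg (fun h => h3 h.symm), if_neg h2, if_neg h2, if_neg h3]
        ring

lemma choose_cast (a b : ℕ) : ((a.choose (b+1) : ℚ)) * (b+1) = (a.choose b : ℚ) * ((a:ℚ) - b) := by
  by_cases h : b ≤ a
  · have h1 := Nat.choose_succ_right_eq a b
    have h2 := congrArg (Nat.cast : ℕ → ℚ) h1
    push_cast [Nat.cast_sub h] at h2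
    linarith [h2]
  · have hab : a < b := lt_of_not_ge h
    simp [Nat.choose_eq_zero_of_lt hab, Nat.choose_eq_zero_of_lt (Nat.lt_succ_of_lt hab)]

lemma sum_ite_val {n : ℕ} (m : ℕ) (c : ℚ) :
    ∑ i : Fin n, (if i.val = m then c else 0) = if m < n then c else 0 := by
  by_cases hm : m < n
  · rw [if_pos hm, Finset.sum_eq_single ⟨m, hm⟩]
    · simp
    · intro b _ hb
      simp [Fin.ext_iff] at hb ⊢
      exact fun h => absurd h hb
    · simp
  · rw [if_neg hm]
    exact Finset.sum_eq_zero fun i _ => by rw [if_neg]; omega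

lemma helper (n k' : ℕ) (hk : k' + 1 ≤ n) :
    Matrix.vecMul (fun j : Fin n => (Nat.choose k' j.val : ℚ))
        (((n : ℚ) + 1) • (1 : Matrix (Fin n) (Fin n) ℚ) - Bn n) =
      ((n : ℚ) - (k' + 1)) • fun j : Fin n => (Nat.choose (k' + 1) j.val : ℚ) := by
  funext j
  have expand : Matrix.vecMul (fun j : Fin n => (Nat.choose k' j.val : ℚ))
      (((n : ℚ) + 1) • (1 : Matrix (Fin n) (Fin n) ℚ) - Bn n) j =
      ∑ i : Fin n, (Nat.choose k' i.val : ℚ) *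
        ((((n : ℚ) + 1) * (if i = j then 1 else 0)) - Bn n i j) := by
    simp [Matrix.vecMul, dotProduct, Matrix.sub_apply, Matrix.smul_apply,
      Matrix.one_apply]
  rw [expand, Finset.sum_congr rfl (fun i _ => key_pt n k' j i), Finset.sum_add_distrib,
    Finset.sum_add_distrib]
  set B := (Nat.choose k' (j.val - 1) : ℚ) * ((n : ℚ) - j.val) with hB
  set A := (Nat.choose k' j.val : ℚ) * ((n : ℚ) - 2 * j.val - 1) with hA
  set C := (Nat.choose k' (j.val + 1) : ℚ) * (-((j.val : ℚ) + 1)) with hC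
  have hs1 : ∑ i : Fin n, (if i.val + 1 = j.val then B else 0) = if 1 ≤ j.val then B else 0 := by
    by_cases hj : 1 ≤ j.val
    · rw [if_pos hj]
      have h0 := sum_ite_val (n := n) (j.val - 1) B
      rw [if_pos (by omega)] at h0
      refine Eq.trans ?_ h0
      refine Finset.sum_congr rfl fun i _ => ?_
      by_cases h : i.val + 1 = j.val
      · rw [if_pos h, if_pos (by omega)]
      · rw [if_neg h, if_neg (by omega)]
    · rw [if_neg hj]
      exact Finset.sum_eq_zero fun i _ => by rw [if_neg]; omega
  have hs2 : ∑ i : Fin n, (if i = j then A else 0) = A := by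
    simp [Finset.sum_ite_eq' Finset.univ j]
  have hs3 : ∑ i : Fin n, (if i.val = j.val + 1 then C else 0) = C := by
    rw [sum_ite_val]
    by_cases h : j.val + 1 < n
    · rw [if_pos h]
    · rw [if_neg h, hC, Nat.choose_eq_zero_of_lt (by omega), Nat.cast_zero, zero_mul]
  rw [hs1, hs2, hs3]
  show _ = ((n : ℚ) - (k' + 1)) * (Nat.choose (k' + 1) j.val : ℚ)
  rcases Nat.eq_zero_or_pos j.val with hj0 | hjp
  · rw [if_neg (by omega), hA, hC, hj0]
    simp [Nat.choose_one_right]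
    push_cast
    ring
  · obtain ⟨m, hm⟩ : ∃ m, j.val = m + 1 := ⟨j.val - 1, by omega⟩
    rw [if_pos (by omega), hA, hB, hC, hm]
    have eqA := choose_cast k' (m + 1)
    have eqB := choose_cast k' m
    rw [Nat.choose_succ_succ, Nat.add_sub_cancel]
    push_cast at eqA eqB ⊢
    linear_combination -eqA - eqB

/-- Let `n ≥ 1` and, for `1 ≤ k ≤ n`, let `α_k ∈ ℚ^n` be the row vector with
`j`-th coordinate (1-based) `C(k−1, j−1)`. Set `B̃_n := (n+1)·I_n − B_n`. Then
`α_k · B̃_n = (n−k)·α_{k+1}` for `1 ≤ k ≤ n−1`, and `α_n · B̃_n = 0`. -/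
theorem stmt_19 (n : ℕ) (hn : 1 ≤ n) :
    (∀ k : ℕ, 1 ≤ k → k ≤ n - 1 →
      Matrix.vecMul (fun j : Fin n => (Nat.choose (k - 1) j.val : ℚ))
          (((n : ℚ) + 1) • (1 : Matrix (Fin n) (Fin n) ℚ) - Bn n) =
        ((n : ℚ) - k) • fun j : Fin n => (Nat.choose k j.val : ℚ)) ∧
    Matrix.vecMul (fun j : Fin n => (Nat.choose (n - 1) j.val : ℚ))
        (((n : ℚ) + 1) • (1 : Matrix (Fin n) (Fin n) ℚ) - Bn n) = 0 := by
  constructor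
  · intro k hk1 hk2
    obtain ⟨k', rfl⟩ : ∃ k', k = k' + 1 := ⟨k - 1, by omega⟩
    have h := helper n k' (by omega)
    rw [Nat.add_sub_cancel] at *
    rw [h]
    congr 1
    push_cast
    ring
  · obtain ⟨k', hk'⟩ : ∃ k', n = k' + 1 := ⟨n - 1, by omega⟩
    have h := helper n k' (by omega)
    have e : n - 1 = k' := by omega
    rw [e, h, hk']
    push_cast
    simp
end
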